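/- arXiv:2505.07929 — 3 statements merged into one kernel-verified Lean document; each statement's English description precedes it below -/
import Mathlib

section
/- Let H be a finite-dimensional complex inner product space, ψ ∈ H a unit vector, V_1,…,V_q unitary operators on H, and O_1,…,O_{q+1} self-adjoint operators on H with M := max_{1≤t≤q+1} ‖O_t‖. Define μ⁰ := ⟨ψ, V_q V_{q−1} ⋯ V_1 ψ⟩; for 1 ≤ l ≤ q+1, μ¹_l := ⟨ψ, V_q ⋯ V_l O_l V_{l−1} ⋯ V_1 ψ⟩; for 1 ≤ l ≤ m ≤ q+1, μ²_{l,m} := ⟨ψ, V_q ⋯ V_m O_m V_{m−1} ⋯ V_l O_l V_{l−1} ⋯ V_1 ψ⟩, extended to l > m by symmetry μ²_{m,l} := μ²_{l,m}. Then there exists a constant K, depending only on q and M (and in particular not on H, the V_t, or D), such that for every real D ≥ 1: |⟨ψ, e^{iO_{q+1}/√D} V_q e^{iO_q/√D} V_{q−1} ⋯ V_1 e^{iO_1/√D} ψ⟩ − μ⁰ − (i/√D) Σ_{l=1}^{q+1} μ¹_l + (1/(2D)) Σ_{l,m=1}^{q+1} μ²_{l,m}| ≤ K · D^{−3/2}.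 -/
/-- `prodDesc f a b = f b * f (b-1) * ⋯ * f a` (the identity if `a > b`):
the product of the operators `f t`, `a ≤ t ≤ b`, composed right-to-left
(so that `f a` acts first). -/
noncomputable def prodDesc {M : Type*} [Monoid M] (f : ℕ → M) (a b : ℕ) : M :=
  (((List.range' a (b + 1 - a)).reverse).map f).prod

lemma prodDesc_empty {M : Type*} [Monoid M] (f : ℕ → M) {a b : ℕ} (h : b < a) :
    prodDesc f a b = 1 := by
  have : b + 1 - a = 0 := Nat.sub_eq_zero_of_le h
  simp [prodDesc, this]

lemma prodDesc_succ_top {M : Type*} [Monoid M] (f : ℕ → M) {a b : ℕ} (h : a ≤ b + 1) :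
    prodDesc f a (b + 1) = f (b + 1) * prodDesc f a b := by
  have h1 : b + 1 + 1 - a = (b + 1 - a) + 1 := by omega
  have h2 : a + (b + 1 - a) = b + 1 := by omega
  rw [prodDesc, h1, List.range'_1_concat, List.reverse_append, h2]
  simp [prodDesc]

lemma prodDesc_congr {M : Type*} [Monoid M] {f g : ℕ → M} {a b : ℕ}
    (h : ∀ t, a ≤ t → t ≤ b → f t = g t) : prodDesc f a b = prodDesc g a b := by
  unfold prodDesc
  congr 1
  apply List.map_congr_left
  intro t ht
  rw [List.mem_reverse, List.mem_range'_1] at ht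
  exact h t ht.1 (by omega)

lemma norm_list_prod_map_le {A : Type*} [NormedRing A] (h1 : ‖(1 : A)‖ ≤ 1)
    (f : ℕ → A) : ∀ (l : List ℕ), (∀ t ∈ l, ‖f t‖ ≤ 1) → ‖(l.map f).prod‖ ≤ 1
  | [], _ => by simpa using h1
  | (t :: l), h => by
    simp only [List.map_cons, List.prod_cons]
    calc ‖f t * (l.map f).prod‖ ≤ ‖f t‖ * ‖(l.map f).prod‖ := norm_mul_le _ _
    _ ≤ 1 * 1 := by
        apply mul_le_mul (h t (by simp))
          (norm_list_prod_map_le h1 f l (fun s hs => h s (by simp [hs])))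
          (norm_nonneg _) zero_le_one
    _ = 1 := by ring

lemma norm_prodDesc_le {A : Type*} [NormedRing A] (h1 : ‖(1 : A)‖ ≤ 1)
    {f : ℕ → A} (h : ∀ t, ‖f t‖ ≤ 1) (a b : ℕ) : ‖prodDesc f a b‖ ≤ 1 := by
  apply norm_list_prod_map_le h1
  intro t _; exact h t

open NormedSpace in
lemma norm_exp_le_of_norm_le {A : Type*} [NormedRing A] [NormedAlgebra ℂ A] [CompleteSpace A]
    (h1 : ‖(1 : A)‖ ≤ 1) {x : A} {M : ℝ} (hx : ‖x‖ ≤ M) : ‖NormedSpace.exp x‖ ≤ Real.exp M := by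
  have hM : 0 ≤ M := le_trans (norm_nonneg _) hx
  rw [NormedSpace.exp_eq_tsum (𝕂 := ℂ)]
  have hsum : Summable fun n : ℕ => ‖((n.factorial : ℂ))⁻¹ • x ^ n‖ :=
    NormedSpace.norm_expSeries_summable' x
  calc ‖∑' (n : ℕ), ((n.factorial : ℂ))⁻¹ • x ^ n‖ ≤ ∑' (n : ℕ), ‖((n.factorial : ℂ))⁻¹ • x ^ n‖ :=
        norm_tsum_le_tsum_norm hsum
  _ ≤ ∑' (n : ℕ), M ^ n / n.factorial := by
      apply Summable.tsum_le_tsum _ hsum (Real.summable_pow_div_factorial M)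
      intro n
      rw [norm_smul, norm_inv, Complex.norm_natCast]
      rcases Nat.eq_zero_or_pos n with h0 | h0
      · subst h0; simpa using h1
      · calc (n.factorial : ℝ)⁻¹ * ‖x ^ n‖ ≤ (n.factorial : ℝ)⁻¹ * ‖x‖ ^ n := by
              apply mul_le_mul_of_nonneg_left (norm_pow_le' x h0)
                (by positivity)
        _ ≤ M ^ n / n.factorial := by
              rw [div_eq_inv_mul]
              exact mul_le_mul_of_nonneg_left (pow_le_pow_left₀ (norm_nonneg _) hx n)
                (by positivity)
  _ = Real.exp M := by
      rw [Real.exp_eq_exp_ℝ, NormedSpace.exp_eq_tsum_div]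

set_option maxHeartbeats 1000000 in

open NormedSpace in
lemma exp_taylor2 {A : Type*} [NormedRing A] [NormedAlgebra ℂ A] [CompleteSpace A]
    {M : ℝ} {x : A} {z : ℂ} (hx : ‖x‖ ≤ M) (hz : ‖z‖ ≤ 1) :
    ‖NormedSpace.exp (z • x) - 1 - z • x - (z ^ 2 / 2) • (x * x)‖ ≤ Real.exp M * ‖z‖ ^ 3 := by
  have hM : 0 ≤ M := le_trans (norm_nonneg _) hx
  set f : ℕ → A := fun n => ((n.factorial : ℂ))⁻¹ • (z • x) ^ n with hf
  have hsum : Summable f := NormedSpace.expSeries_summable' (𝕂 := ℂ) (z • x)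
  have h1 : Summable fun n => f (n + 1) := (summable_nat_add_iff 1).mpr hsum
  have h2 : Summable fun n => f (n + 1 + 1) := (summable_nat_add_iff 1).mpr h1
  have h3 : Summable fun n => f (n + 1 + 1 + 1) := (summable_nat_add_iff 1).mpr h2
  have hexp0 : NormedSpace.exp (z • x) = ∑' (n : ℕ), f n := by
    rw [NormedSpace.exp_eq_tsum (𝕂 := ℂ)]
  have hexp : NormedSpace.exp (z • x) = f 0 + (f 1 + (f 2 + ∑' (n : ℕ), f (n + 1 + 1 + 1))) := by
    rw [hexp0, Summable.tsum_eq_zero_add hsum, Summable.tsum_eq_zero_add h1, Summable.tsum_eq_zero_add h2]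
    try norm_num
  have hf0 : f 0 = 1 := by simp [hf]
  have hf1 : f 1 = z • x := by simp [hf]
  have hf2 : f 2 = (z ^ 2 / 2) • (x * x) := by
    simp only [hf, smul_pow, smul_smul]
    norm_num [sq]
    ring_nf
  have key : NormedSpace.exp (z • x) - 1 - z • x - (z ^ 2 / 2) • (x * x)
      = ∑' (n : ℕ), f (n + 1 + 1 + 1) := by
    rw [hexp, hf0, hf1, hf2]; abel
  rw [key]
  have hnorm : ∀ n : ℕ, ‖f (n + 1 + 1 + 1)‖ ≤ (M ^ (n + 3) / (n + 3).factorial) * ‖z‖ ^ 3 := by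
    intro n
    have he : n + 1 + 1 + 1 = n + 3 := by omega
    rw [he, hf]
    simp only [norm_smul, norm_inv, Complex.norm_natCast, smul_pow, norm_smul, norm_pow]
    have hz3 : ‖z‖ ^ (n + 3) ≤ ‖z‖ ^ 3 :=
      pow_le_pow_of_le_one (norm_nonneg _) hz (by omega)
    have hx3 : ‖x ^ (n + 3)‖ ≤ M ^ (n + 3) :=
      le_trans (norm_pow_le' x (by omega)) (pow_le_pow_left₀ (norm_nonneg _) hx _)
    calc ((n + 3).factorial : ℝ)⁻¹ * (‖z‖ ^ (n + 3) * ‖x ^ (n + 3)‖)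
        ≤ ((n + 3).factorial : ℝ)⁻¹ * (‖z‖ ^ 3 * M ^ (n + 3)) := by
          apply mul_le_mul_of_nonneg_left _ (by positivity)
          exact mul_le_mul hz3 hx3 (norm_nonneg _) (by positivity)
      _ = (M ^ (n + 3) / (n + 3).factorial) * ‖z‖ ^ 3 := by ring
  have hsumM : Summable fun n : ℕ => (M ^ (n + 3) / (n + 3).factorial) * ‖z‖ ^ 3 :=
    (((summable_nat_add_iff 3).mpr (Real.summable_pow_div_factorial M))).mul_right _
  calc ‖∑' (n : ℕ), f (n + 1 + 1 + 1)‖ ≤ ∑' (n : ℕ), ‖f (n + 1 + 1 + 1)‖ :=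
        norm_tsum_le_tsum_norm (by
          apply Summable.of_nonneg_of_le (fun n => norm_nonneg _) hnorm hsumM)
    _ ≤ ∑' (n : ℕ), (M ^ (n + 3) / (n + 3).factorial) * ‖z‖ ^ 3 := by
        apply Summable.tsum_le_tsum hnorm _ hsumM
        apply Summable.of_nonneg_of_le (fun n => norm_nonneg _) hnorm hsumM
    _ = (∑' (n : ℕ), M ^ (n + 3) / (n + 3).factorial) * ‖z‖ ^ 3 := by
        rw [tsum_mul_right]
    _ ≤ Real.exp M * ‖z‖ ^ 3 := by
        apply mul_le_mul_of_nonneg_right _ (by positivity)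
        have hsplit := Summable.sum_add_tsum_nat_add 3 (Real.summable_pow_div_factorial M)
        have hpart : 0 ≤ ∑ i ∈ Finset.range 3, M ^ i / i.factorial := by positivity
        have hexpM : (∑' (n : ℕ), M ^ n / n.factorial) = Real.exp M := by
          rw [Real.exp_eq_exp_ℝ, NormedSpace.exp_eq_tsum_div]
        linarith [hsplit, hpart]


section ABC
variable {A : Type*}

noncomputable def Aprod [Monoid A] (V : ℕ → A) (k : ℕ) : A := prodDesc V 1 k

noncomputable def Bsum [Ring A] (V O : ℕ → A) (k : ℕ) : A :=
  ∑ l ∈ Finset.Icc 1 k, prodDesc V l k * O l * prodDesc V 1 (l - 1)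

noncomputable def Csum [Ring A] (V O : ℕ → A) (k : ℕ) : A :=
  ∑ l ∈ Finset.Icc 1 k, ∑ m ∈ Finset.Icc 1 k,
    prodDesc V (max l m) k * O (max l m) * prodDesc V (min l m) (max l m - 1) *
      O (min l m) * prodDesc V 1 (min l m - 1)

lemma Aprod_succ [Monoid A] (V : ℕ → A) (k : ℕ) :
    Aprod V (k + 1) = V (k + 1) * Aprod V k :=
  prodDesc_succ_top V (by omega)

lemma Bsum_succ [Ring A] (V O : ℕ → A) (k : ℕ) :
    Bsum V O (k + 1) = V (k + 1) * Bsum V O k + V (k + 1) * (O (k + 1) * Aprod V k) := by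
  unfold Bsum
  rw [Finset.sum_Icc_succ_top (by omega : 1 ≤ k + 1)]
  congr 1
  · rw [Finset.mul_sum]
    apply Finset.sum_congr rfl
    intro l hl
    rw [Finset.mem_Icc] at hl
    rw [prodDesc_succ_top V (by omega : l ≤ k + 1)]
    simp [mul_assoc]
  · rw [prodDesc_succ_top V (by omega : k + 1 ≤ k + 1),
      prodDesc_empty V (by omega : k < k + 1)]
    simp only [Nat.add_sub_cancel, mul_one]
    rw [Aprod, mul_assoc]

lemma Csum_succ [Ring A] (V O : ℕ → A) (k : ℕ) :
    Csum V O (k + 1) = V (k + 1) * Csum V O k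
      + V (k + 1) * (O (k + 1) * Bsum V O k)
      + V (k + 1) * (O (k + 1) * Bsum V O k)
      + V (k + 1) * (O (k + 1) * (O (k + 1) * Aprod V k)) := by
  set T : ℕ → ℕ → A := fun l m =>
    prodDesc V (max l m) (k + 1) * O (max l m) * prodDesc V (min l m) (max l m - 1) *
      O (min l m) * prodDesc V 1 (min l m - 1) with hT
  have houter : Csum V O (k + 1) = ∑ l ∈ Finset.Icc 1 k, ∑ m ∈ Finset.Icc 1 (k + 1), T l m
      + ∑ m ∈ Finset.Icc 1 (k + 1), T (k + 1) m := by
    rw [Csum, Finset.sum_Icc_succ_top (by omega : 1 ≤ k + 1)]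
  have hinner : ∀ l ∈ Finset.Icc 1 k,
      ∑ m ∈ Finset.Icc 1 (k + 1), T l m = (∑ m ∈ Finset.Icc 1 k, T l m) + T l (k + 1) :=
    fun l _ => Finset.sum_Icc_succ_top (by omega : 1 ≤ k + 1) _
  have hlast : ∑ m ∈ Finset.Icc 1 (k + 1), T (k + 1) m
      = (∑ m ∈ Finset.Icc 1 k, T (k + 1) m) + T (k + 1) (k + 1) :=
    Finset.sum_Icc_succ_top (by omega : 1 ≤ k + 1) _
  rw [houter, Finset.sum_congr rfl hinner, Finset.sum_add_distrib, hlast]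
  have hS1 : ∑ l ∈ Finset.Icc 1 k, ∑ m ∈ Finset.Icc 1 k, T l m
      = V (k + 1) * Csum V O k := by
    rw [Csum, Finset.mul_sum]
    apply Finset.sum_congr rfl
    intro l hl
    rw [Finset.mem_Icc] at hl
    rw [Finset.mul_sum]
    apply Finset.sum_congr rfl
    intro m hm
    rw [Finset.mem_Icc] at hm
    rw [hT]
    simp only
    rw [prodDesc_succ_top V (by omega : max l m ≤ k + 1)]
    simp [mul_assoc]
  have hS2 : ∀ l, 1 ≤ l → l ≤ k → T l (k + 1)
      = V (k + 1) * (O (k + 1) * (prodDesc V l k * O l * prodDesc V 1 (l - 1))) := by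
    intro l h1l hlk
    rw [hT]
    simp only
    rw [max_eq_right (by omega : l ≤ k + 1), min_eq_left (by omega : l ≤ k + 1)]
    rw [prodDesc_succ_top V (by omega : k + 1 ≤ k + 1),
      prodDesc_empty V (by omega : k < k + 1)]
    simp only [Nat.add_sub_cancel, mul_one]
    simp [mul_assoc]
  have hS2' : ∑ l ∈ Finset.Icc 1 k, T l (k + 1) = V (k + 1) * (O (k + 1) * Bsum V O k) := by
    rw [Bsum, Finset.mul_sum, Finset.mul_sum]
    apply Finset.sum_congr rfl
    intro l hl
    rw [Finset.mem_Icc] at hl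
    exact hS2 l hl.1 hl.2
  have hS3 : ∑ m ∈ Finset.Icc 1 k, T (k + 1) m = V (k + 1) * (O (k + 1) * Bsum V O k) := by
    rw [Bsum, Finset.mul_sum, Finset.mul_sum]
    apply Finset.sum_congr rfl
    intro m hm
    rw [Finset.mem_Icc] at hm
    have : T (k + 1) m = T m (k + 1) := by rw [hT]; simp only [max_comm, min_comm]
    rw [this]
    exact hS2 m hm.1 hm.2
  have hS4 : T (k + 1) (k + 1)
      = V (k + 1) * (O (k + 1) * (O (k + 1) * Aprod V k)) := by
    rw [hT]
    simp only [max_self, min_self, Nat.add_sub_cancel]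
    rw [prodDesc_succ_top V (by omega : k + 1 ≤ k + 1),
      prodDesc_empty V (by omega : k < k + 1)]
    rw [Aprod]
    simp [mul_assoc]
  rw [hS1, hS2', hS3, hS4]
  abel

end ABC

section NormABC
variable {A : Type*} [NormedRing A] {V O : ℕ → A} {M : ℝ}

lemma norm_Bsum_le (h1 : ‖(1 : A)‖ ≤ 1) (hV : ∀ t, ‖V t‖ ≤ 1) (hO : ∀ t, ‖O t‖ ≤ M)
    (k : ℕ) : ‖Bsum V O k‖ ≤ k * M := by
  calc ‖Bsum V O k‖ ≤ ∑ _l ∈ Finset.Icc 1 k, M := by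
        apply norm_sum_le_of_le
        intro l _
        calc ‖prodDesc V l k * O l * prodDesc V 1 (l - 1)‖ ≤ 1 * M * 1 :=
              norm_mul_le_of_le (norm_mul_le_of_le (norm_prodDesc_le h1 hV l k) (hO l))
                (norm_prodDesc_le h1 hV 1 (l - 1))
          _ = M := by ring
    _ = k * M := by
        rw [Finset.sum_const, Nat.card_Icc, nsmul_eq_mul]
        norm_num

lemma norm_Csum_le (h1 : ‖(1 : A)‖ ≤ 1) (hV : ∀ t, ‖V t‖ ≤ 1) (hO : ∀ t, ‖O t‖ ≤ M)
    (k : ℕ) : ‖Csum V O k‖ ≤ (k * M) * (k * M) := by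
  have hterm : ∀ l m : ℕ,
      ‖prodDesc V (max l m) k * O (max l m) * prodDesc V (min l m) (max l m - 1) *
        O (min l m) * prodDesc V 1 (min l m - 1)‖ ≤ M * M := by
    intro l m
    calc ‖prodDesc V (max l m) k * O (max l m) * prodDesc V (min l m) (max l m - 1) *
        O (min l m) * prodDesc V 1 (min l m - 1)‖ ≤ 1 * M * 1 * M * 1 :=
          norm_mul_le_of_le (norm_mul_le_of_le (norm_mul_le_of_le
            (norm_mul_le_of_le (norm_prodDesc_le h1 hV (max l m) k) (hO (max l m)))
            (norm_prodDesc_le h1 hV (min l m) (max l m - 1))) (hO (min l m)))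
            (norm_prodDesc_le h1 hV 1 (min l m - 1))
      _ = M * M := by ring
  calc ‖Csum V O k‖ ≤ ∑ _l ∈ Finset.Icc 1 k, (k * (M * M)) := by
        apply norm_sum_le_of_le
        intro l _
        calc ‖∑ m ∈ Finset.Icc 1 k, _‖ ≤ ∑ _m ∈ Finset.Icc 1 k, (M * M) :=
              norm_sum_le_of_le _ (fun m _ => hterm l m)
          _ = k * (M * M) := by
              rw [Finset.sum_const, Nat.card_Icc, nsmul_eq_mul]; norm_num
    _ = (k * M) * (k * M) := by
        rw [Finset.sum_const, Nat.card_Icc, nsmul_eq_mul]; push_cast; ring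

end NormABC

lemma norm_add5_le {A : Type*} [SeminormedAddCommGroup A] (a b c d e : A) :
    ‖a + b + c + d + e‖ ≤ ‖a‖ + ‖b‖ + ‖c‖ + ‖d‖ + ‖e‖ :=
  le_trans (norm_add_le _ _) (add_le_add (le_trans (norm_add_le _ _) (add_le_add
    (le_trans (norm_add_le _ _) (add_le_add (norm_add_le _ _) le_rfl)) le_rfl)) le_rfl)

set_option maxHeartbeats 2000000 in
open NormedSpace in
lemma core_bound (M : ℝ) (hM : 0 ≤ M) (k : ℕ) :
    ∃ K : ℝ, 0 ≤ K ∧ ∀ (A : Type) [NormedRing A] [NormedAlgebra ℂ A] [CompleteSpace A],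
      ‖(1 : A)‖ ≤ 1 → ∀ (V O : ℕ → A) (z : ℂ),
      (∀ t, ‖V t‖ ≤ 1) → (∀ t, ‖O t‖ ≤ M) → ‖z‖ ≤ 1 →
      ‖prodDesc (fun t => V t * NormedSpace.exp (z • O t)) 1 k - Aprod V k
        - z • Bsum V O k - (z ^ 2 / 2) • Csum V O k‖ ≤ K * ‖z‖ ^ 3 := by
  induction k with
  | zero =>
    refine ⟨0, le_rfl, ?_⟩
    intro A _ _ _ h1 V O z hV hO hz
    have he : Finset.Icc 1 0 = (∅ : Finset ℕ) := by decide
    rw [prodDesc_empty _ (by omega), Aprod, prodDesc_empty _ (by omega), Bsum, Csum, he]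
    simp
  | succ k ih =>
    obtain ⟨K, hK0, hK⟩ := ih
    have e0 : (0:ℝ) ≤ Real.exp M := (Real.exp_pos M).le
    have hk : (0:ℝ) ≤ (k:ℝ) := Nat.cast_nonneg k
    have hkM : (0:ℝ) ≤ (k:ℝ) * M := mul_nonneg hk hM
    have hkM2 : (0:ℝ) ≤ ((k:ℝ) * M) * ((k:ℝ) * M) := mul_nonneg hkM hkM
    refine ⟨Real.exp M * K + Real.exp M * (1 + (k:ℝ) * M + ((k:ℝ) * M) * ((k:ℝ) * M) / 2)
      + M * (((k:ℝ) * M) * ((k:ℝ) * M)) / 2 + M * (M * ((k:ℝ) * M)) / 2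
      + M * (M * (((k:ℝ) * M) * ((k:ℝ) * M))) / 4, ?_, ?_⟩
    · have t1 := mul_nonneg e0 hK0
      have t2 : (0:ℝ) ≤ Real.exp M * (1 + (k:ℝ) * M + ((k:ℝ) * M) * ((k:ℝ) * M) / 2) :=
        mul_nonneg e0 (by linarith)
      have t3 : (0:ℝ) ≤ M * (((k:ℝ) * M) * ((k:ℝ) * M)) / 2 :=
        div_nonneg (mul_nonneg hM hkM2) (by norm_num)
      have t4 : (0:ℝ) ≤ M * (M * ((k:ℝ) * M)) / 2 :=
        div_nonneg (mul_nonneg hM (mul_nonneg hM hkM)) (by norm_num)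
      have t5 : (0:ℝ) ≤ M * (M * (((k:ℝ) * M) * ((k:ℝ) * M))) / 4 :=
        div_nonneg (mul_nonneg hM (mul_nonneg hM hkM2)) (by norm_num)
      linarith
    intro A _ _ _ h1 V O z hV hO hz
    have hIH := hK A h1 V O z hV hO hz
    set E : A := NormedSpace.exp (z • O (k + 1)) with hEdef
    set R : A := E - 1 - z • O (k + 1) - (z ^ 2 / 2) • (O (k + 1) * O (k + 1)) with hRdef
    have hR : ‖R‖ ≤ Real.exp M * ‖z‖ ^ 3 := exp_taylor2 (hO (k + 1)) hz
    have hOz : ‖z • O (k + 1)‖ ≤ M := by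
      rw [norm_smul]
      calc ‖z‖ * ‖O (k + 1)‖ ≤ 1 * M := mul_le_mul hz (hO _) (norm_nonneg _) zero_le_one
        _ = M := one_mul M
    have hE : ‖E‖ ≤ Real.exp M := norm_exp_le_of_norm_le h1 hOz
    have hEexp : E = 1 + z • O (k + 1) + (z ^ 2 / 2) • (O (k + 1) * O (k + 1)) + R := by
      rw [hRdef]; abel
    set P : A := prodDesc (fun t => V t * NormedSpace.exp (z • O t)) 1 k with hPdef
    set X : A := Aprod V k + z • Bsum V O k + (z ^ 2 / 2) • Csum V O k with hXdef
    have hsucc : prodDesc (fun t => V t * NormedSpace.exp (z • O t)) 1 (k + 1) = (V (k + 1) * E) * P :=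
      prodDesc_succ_top _ (by omega)
    have hIH' : ‖P - X‖ ≤ K * ‖z‖ ^ 3 := by
      have : P - X = P - Aprod V k - z • Bsum V O k - (z ^ 2 / 2) • Csum V O k := by
        rw [hXdef]; abel
      rw [this]; exact hIH
    have key : prodDesc (fun t => V t * NormedSpace.exp (z • O t)) 1 (k + 1) - Aprod V (k + 1)
        - z • Bsum V O (k + 1) - (z ^ 2 / 2) • Csum V O (k + 1)
        = (V (k + 1) * (E * (P - X)))
          + (V (k + 1) * (R * X))
          + (z ^ 3 / 2) • (V (k + 1) * (O (k + 1) * Csum V O k))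
          + (z ^ 3 / 2) • (V (k + 1) * (O (k + 1) * (O (k + 1) * Bsum V O k)))
          + (z ^ 4 / 4) • (V (k + 1) * (O (k + 1) * (O (k + 1) * Csum V O k))) := by
      rw [hsucc, Aprod_succ, Bsum_succ, Csum_succ, hEexp, hXdef]
      simp only [mul_add, add_mul, mul_sub, sub_mul, smul_mul_assoc, mul_smul_comm,
        smul_smul, smul_add, smul_sub, mul_assoc, one_mul, mul_one]
      match_scalars <;> ring
    rw [key]
    have hA : ‖Aprod V k‖ ≤ 1 := norm_prodDesc_le h1 hV 1 k
    have hB : ‖Bsum V O k‖ ≤ (k:ℝ) * M := norm_Bsum_le h1 hV hO k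
    have hC : ‖Csum V O k‖ ≤ ((k:ℝ) * M) * ((k:ℝ) * M) := norm_Csum_le h1 hV hO k
    have hz0 : (0:ℝ) ≤ ‖z‖ := norm_nonneg z
    have h2c : ‖(2:ℂ)‖ = 2 := by simp
    have h4c : ‖(4:ℂ)‖ = 4 := by simp
    have hz2 : ‖z‖ ^ 2 ≤ 1 := pow_le_one₀ hz0 hz
    have hz43 : ‖z‖ ^ 4 ≤ ‖z‖ ^ 3 := pow_le_pow_of_le_one hz0 hz (by omega)
    have hX : ‖X‖ ≤ 1 + (k:ℝ) * M + ((k:ℝ) * M) * ((k:ℝ) * M) / 2 := by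
      rw [hXdef]
      refine le_trans (norm_add_le _ _) (add_le_add (le_trans (norm_add_le _ _)
        (add_le_add hA ?_)) ?_)
      · rw [norm_smul]
        calc ‖z‖ * ‖Bsum V O k‖ ≤ 1 * ((k:ℝ) * M) :=
              mul_le_mul hz hB (norm_nonneg _) zero_le_one
          _ = (k:ℝ) * M := one_mul _
      · rw [norm_smul, norm_div, norm_pow, h2c]
        calc ‖z‖ ^ 2 / 2 * ‖Csum V O k‖ ≤ (1 / 2) * (((k:ℝ) * M) * ((k:ℝ) * M)) := by
              apply mul_le_mul (by linarith) hC (norm_nonneg _) (by norm_num)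
          _ = ((k:ℝ) * M) * ((k:ℝ) * M) / 2 := by ring
    have b1 : ‖V (k + 1) * (E * (P - X))‖ ≤ (Real.exp M * K) * ‖z‖ ^ 3 := by
      calc ‖V (k + 1) * (E * (P - X))‖ ≤ 1 * (Real.exp M * (K * ‖z‖ ^ 3)) :=
            norm_mul_le_of_le (hV _) (norm_mul_le_of_le hE hIH')
        _ = (Real.exp M * K) * ‖z‖ ^ 3 := by ring
    have b2 : ‖V (k + 1) * (R * X)‖
        ≤ (Real.exp M * (1 + (k:ℝ) * M + ((k:ℝ) * M) * ((k:ℝ) * M) / 2)) * ‖z‖ ^ 3 := by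
      calc ‖V (k + 1) * (R * X)‖
          ≤ 1 * ((Real.exp M * ‖z‖ ^ 3) * (1 + (k:ℝ) * M + ((k:ℝ) * M) * ((k:ℝ) * M) / 2)) :=
            norm_mul_le_of_le (hV _) (norm_mul_le_of_le hR hX)
        _ = (Real.exp M * (1 + (k:ℝ) * M + ((k:ℝ) * M) * ((k:ℝ) * M) / 2)) * ‖z‖ ^ 3 := by
            ring
    have b3 : ‖(z ^ 3 / 2) • (V (k + 1) * (O (k + 1) * Csum V O k))‖
        ≤ (M * (((k:ℝ) * M) * ((k:ℝ) * M)) / 2) * ‖z‖ ^ 3 := by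
      rw [norm_smul, norm_div, norm_pow, h2c]
      calc ‖z‖ ^ 3 / 2 * ‖V (k + 1) * (O (k + 1) * Csum V O k)‖
          ≤ ‖z‖ ^ 3 / 2 * (1 * (M * (((k:ℝ) * M) * ((k:ℝ) * M)))) := by
            apply mul_le_mul_of_nonneg_left
              (norm_mul_le_of_le (hV _) (norm_mul_le_of_le (hO _) hC)) (by positivity)
        _ = (M * (((k:ℝ) * M) * ((k:ℝ) * M)) / 2) * ‖z‖ ^ 3 := by ring
    have b4 : ‖(z ^ 3 / 2) • (V (k + 1) * (O (k + 1) * (O (k + 1) * Bsum V O k)))‖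
        ≤ (M * (M * ((k:ℝ) * M)) / 2) * ‖z‖ ^ 3 := by
      rw [norm_smul, norm_div, norm_pow, h2c]
      calc ‖z‖ ^ 3 / 2 * ‖V (k + 1) * (O (k + 1) * (O (k + 1) * Bsum V O k))‖
          ≤ ‖z‖ ^ 3 / 2 * (1 * (M * (M * ((k:ℝ) * M)))) := by
            apply mul_le_mul_of_nonneg_left (norm_mul_le_of_le (hV _)
              (norm_mul_le_of_le (hO _) (norm_mul_le_of_le (hO _) hB))) (by positivity)
        _ = (M * (M * ((k:ℝ) * M)) / 2) * ‖z‖ ^ 3 := by ring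
    have b5 : ‖(z ^ 4 / 4) • (V (k + 1) * (O (k + 1) * (O (k + 1) * Csum V O k)))‖
        ≤ (M * (M * (((k:ℝ) * M) * ((k:ℝ) * M))) / 4) * ‖z‖ ^ 3 := by
      rw [norm_smul, norm_div, norm_pow, h4c]
      have hW : ‖V (k + 1) * (O (k + 1) * (O (k + 1) * Csum V O k))‖
          ≤ 1 * (M * (M * (((k:ℝ) * M) * ((k:ℝ) * M)))) :=
        norm_mul_le_of_le (hV _) (norm_mul_le_of_le (hO _) (norm_mul_le_of_le (hO _) hC))
      have hnn : (0:ℝ) ≤ 1 * (M * (M * (((k:ℝ) * M) * ((k:ℝ) * M)))) :=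
        le_trans (norm_nonneg _) hW
      calc ‖z‖ ^ 4 / 4 * ‖V (k + 1) * (O (k + 1) * (O (k + 1) * Csum V O k))‖
          ≤ (‖z‖ ^ 3 / 4) * (1 * (M * (M * (((k:ℝ) * M) * ((k:ℝ) * M))))) := by
            apply mul_le_mul (by linarith) hW (norm_nonneg _) (by positivity)
        _ = (M * (M * (((k:ℝ) * M) * ((k:ℝ) * M))) / 4) * ‖z‖ ^ 3 := by ring
    calc ‖_ + _ + _ + _ + _‖ ≤ _ := norm_add5_le _ _ _ _ _
      _ ≤ (Real.exp M * K) * ‖z‖ ^ 3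
          + (Real.exp M * (1 + (k:ℝ) * M + ((k:ℝ) * M) * ((k:ℝ) * M) / 2)) * ‖z‖ ^ 3
          + (M * (((k:ℝ) * M) * ((k:ℝ) * M)) / 2) * ‖z‖ ^ 3
          + (M * (M * ((k:ℝ) * M)) / 2) * ‖z‖ ^ 3
          + (M * (M * (((k:ℝ) * M) * ((k:ℝ) * M))) / 4) * ‖z‖ ^ 3 :=
        add_le_add (add_le_add (add_le_add (add_le_add b1 b2) b3) b4) b5
      _ = (Real.exp M * K + Real.exp M * (1 + (k:ℝ) * M + ((k:ℝ) * M) * ((k:ℝ) * M) / 2)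
          + M * (((k:ℝ) * M) * ((k:ℝ) * M)) / 2 + M * (M * ((k:ℝ) * M)) / 2
          + M * (M * (((k:ℝ) * M) * ((k:ℝ) * M))) / 4) * ‖z‖ ^ 3 := by ring

/-- Second-order expansion of time correlations of near-identity
operators: there is a constant `K = K(q, M)`, independent of the Hilbert space `H`,
the state `ψ`, the unitaries `V_t`, the self-adjoint operators `O_t` (with `‖O_t‖ ≤ M`)
and of `D`, such that for all real `D ≥ 1`,
`|⟨ψ, e^{iO_{q+1}/√D} V_q e^{iO_q/√D} ⋯ V_1 e^{iO_1/√D} ψ⟩ − μ⁰ − (i/√D) Σ_l μ¹_l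
 + (1/(2D)) Σ_{l,m} μ²_{l,m}| ≤ K · D^{−3/2}`. -/
theorem stmt0 (q : ℕ) (M : ℝ) :
    ∃ K : ℝ,
      ∀ (H : Type) [NormedAddCommGroup H] [InnerProductSpace ℂ H] [FiniteDimensional ℂ H],
        ∀ (ψ : H) (V O : ℕ → H →L[ℂ] H),
          ‖ψ‖ = 1 →
          (∀ t, 1 ≤ t → t ≤ q → V t ∈ unitary (H →L[ℂ] H)) →
          (∀ t, 1 ≤ t → t ≤ q + 1 → IsSelfAdjoint (O t)) →
          (∀ t, 1 ≤ t → t ≤ q + 1 → ‖O t‖ ≤ M) →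
          ∀ D : ℝ, 1 ≤ D →
            ‖(inner ℂ ψ
                  ((NormedSpace.exp ((Complex.I / (Real.sqrt D : ℂ)) • O (q + 1)) *
                      prodDesc
                        (fun t =>
                          V t * NormedSpace.exp ((Complex.I / (Real.sqrt D : ℂ)) • O t))
                        1 q) ψ) : ℂ)
                - (inner ℂ ψ (prodDesc V 1 q ψ) : ℂ)
                - (Complex.I / (Real.sqrt D : ℂ)) *
                    ∑ l ∈ Finset.Icc 1 (q + 1),
                      (inner ℂ ψ ((prodDesc V l q * O l * prodDesc V 1 (l - 1)) ψ) : ℂ)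
                + (1 / (2 * (D : ℂ))) *
                    ∑ l ∈ Finset.Icc 1 (q + 1), ∑ m ∈ Finset.Icc 1 (q + 1),
                      (inner ℂ ψ
                          ((prodDesc V (max l m) q * O (max l m) *
                              prodDesc V (min l m) (max l m - 1) * O (min l m) *
                              prodDesc V 1 (min l m - 1)) ψ) : ℂ)‖
              ≤ K * D ^ (-(3 / 2) : ℝ) := by
  obtain ⟨K, hK0, hK⟩ := core_bound (max M 0) (le_max_right M 0) (q + 1)
  refine ⟨K, ?_⟩
  intro H _ _ _ ψ V O hψ hV hO hOM D hD
  have hD0 : (0:ℝ) < D := lt_of_lt_of_le one_pos hD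
  have hsD : 1 ≤ Real.sqrt D := by
    have h := Real.sqrt_le_sqrt hD
    rwa [Real.sqrt_one] at h
  have hsD0 : (0:ℝ) < Real.sqrt D := lt_of_lt_of_le one_pos hsD
  set z : ℂ := Complex.I / (Real.sqrt D : ℂ) with hzdef
  have hznorm : ‖z‖ = (Real.sqrt D)⁻¹ := by
    rw [hzdef, norm_div, Complex.norm_I]
    rw [Complex.norm_real, Real.norm_eq_abs, abs_of_nonneg hsD0.le, one_div]
  have hz1 : ‖z‖ ≤ 1 := by
    rw [hznorm]
    rw [inv_le_one_iff₀]
    right; exact hsD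
  have hone : ‖(1 : H →L[ℂ] H)‖ ≤ 1 := by
    rw [ContinuousLinearMap.one_def]; exact ContinuousLinearMap.norm_id_le
  set V' : ℕ → (H →L[ℂ] H) := fun t => if 1 ≤ t ∧ t ≤ q then V t else 1 with hV'def
  set O' : ℕ → (H →L[ℂ] H) := fun t => if 1 ≤ t ∧ t ≤ q + 1 then O t else 0 with hO'def
  have hV'le : ∀ t, ‖V' t‖ ≤ 1 := by
    intro t
    rw [hV'def]
    dsimp only
    split_ifs with h
    · have hu := hV t h.1 h.2
      have hsq : ‖V t‖ * ‖V t‖ ≤ 1 := by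
        rw [← CStarRing.norm_star_mul_self, (Unitary.mem_iff.mp hu).1]
        exact hone
      nlinarith [norm_nonneg (V t)]
    · exact hone
  have hO'le : ∀ t, ‖O' t‖ ≤ max M 0 := by
    intro t
    rw [hO'def]
    dsimp only
    split_ifs with h
    · exact le_trans (hOM t h.1 h.2) (le_max_left M 0)
    · rw [norm_zero]; exact le_max_right M 0
  have hV'eq : ∀ t, 1 ≤ t → t ≤ q → V' t = V t := by
    intro t h1 h2; rw [hV'def]; simp [h1, h2]
  have hO'eq : ∀ t, 1 ≤ t → t ≤ q + 1 → O' t = O t := by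
    intro t h1 h2; rw [hO'def]; simp [h1, h2]
  have hV'top : V' (q + 1) = 1 := by rw [hV'def]; simp
  -- identification of the pieces
  have hGeq : prodDesc (fun t => V' t * NormedSpace.exp (z • O' t)) 1 (q + 1)
      = NormedSpace.exp (z • O (q + 1)) *
          prodDesc (fun t => V t * NormedSpace.exp (z • O t)) 1 q := by
    rw [prodDesc_succ_top _ (by omega : 1 ≤ q + 1)]
    have h1 : V' (q + 1) * NormedSpace.exp (z • O' (q + 1))
        = NormedSpace.exp (z • O (q + 1)) := by
      rw [hV'top, hO'eq (q + 1) (by omega) (by omega), one_mul]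
    rw [h1]
    congr 1
    apply prodDesc_congr
    intro t ht1 ht2
    rw [hV'eq t ht1 ht2, hO'eq t ht1 (by omega)]
  have hAeq : Aprod V' (q + 1) = prodDesc V 1 q := by
    rw [Aprod, prodDesc_succ_top _ (by omega : 1 ≤ q + 1), hV'top, one_mul]
    apply prodDesc_congr
    intro t ht1 ht2
    exact hV'eq t ht1 ht2
  have hBl : ∀ l, 1 ≤ l → l ≤ q + 1 →
      prodDesc V' l (q + 1) * O' l * prodDesc V' 1 (l - 1)
        = prodDesc V l q * O l * prodDesc V 1 (l - 1) := by
    intro l h1 h2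
    have e1 : prodDesc V' l (q + 1) = prodDesc V l q := by
      rw [prodDesc_succ_top _ (by omega : l ≤ q + 1), hV'top, one_mul]
      exact prodDesc_congr (fun t ht1 ht2 => hV'eq t (by omega) ht2)
    have e2 : prodDesc V' 1 (l - 1) = prodDesc V 1 (l - 1) :=
      prodDesc_congr (fun t ht1 ht2 => hV'eq t ht1 (by omega))
    rw [e1, e2, hO'eq l h1 h2]
  have hCl : ∀ l m, 1 ≤ l → l ≤ q + 1 → 1 ≤ m → m ≤ q + 1 →
      prodDesc V' (max l m) (q + 1) * O' (max l m) *
          prodDesc V' (min l m) (max l m - 1) * O' (min l m) *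
          prodDesc V' 1 (min l m - 1)
        = prodDesc V (max l m) q * O (max l m) *
            prodDesc V (min l m) (max l m - 1) * O (min l m) *
            prodDesc V 1 (min l m - 1) := by
    intro l m hl1 hl2 hm1 hm2
    have e1 : prodDesc V' (max l m) (q + 1) = prodDesc V (max l m) q := by
      rw [prodDesc_succ_top _ (by omega : max l m ≤ q + 1), hV'top, one_mul]
      exact prodDesc_congr (fun t ht1 ht2 => hV'eq t (by omega) ht2)
    have e2 : prodDesc V' (min l m) (max l m - 1) = prodDesc V (min l m) (max l m - 1) :=
      prodDesc_congr (fun t ht1 ht2 => hV'eq t (by omega) (by omega))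
    have e3 : prodDesc V' 1 (min l m - 1) = prodDesc V 1 (min l m - 1) :=
      prodDesc_congr (fun t ht1 ht2 => hV'eq t ht1 (by omega))
    rw [e1, e2, e3, hO'eq (max l m) (by omega) (by omega), hO'eq (min l m) (by omega) (by omega)]
  have hBeq : (inner ℂ ψ ((Bsum V' O' (q + 1)) ψ) : ℂ)
      = ∑ l ∈ Finset.Icc 1 (q + 1),
          (inner ℂ ψ ((prodDesc V l q * O l * prodDesc V 1 (l - 1)) ψ) : ℂ) := by
    rw [Bsum, ContinuousLinearMap.sum_apply, inner_sum]
    apply Finset.sum_congr rfl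
    intro l hl
    rw [Finset.mem_Icc] at hl
    rw [hBl l hl.1 hl.2]
  have hCeq : (inner ℂ ψ ((Csum V' O' (q + 1)) ψ) : ℂ)
      = ∑ l ∈ Finset.Icc 1 (q + 1), ∑ m ∈ Finset.Icc 1 (q + 1),
          (inner ℂ ψ
            ((prodDesc V (max l m) q * O (max l m) *
                prodDesc V (min l m) (max l m - 1) * O (min l m) *
                prodDesc V 1 (min l m - 1)) ψ) : ℂ) := by
    rw [Csum, ContinuousLinearMap.sum_apply, inner_sum]
    apply Finset.sum_congr rfl
    intro l hl
    rw [Finset.mem_Icc] at hl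
    rw [ContinuousLinearMap.sum_apply, inner_sum]
    apply Finset.sum_congr rfl
    intro m hm
    rw [Finset.mem_Icc] at hm
    rw [hCl l m hl.1 hl.2 hm.1 hm.2]
  have hz2 : z ^ 2 / 2 = -(1 / (2 * (D : ℂ))) := by
    rw [hzdef, div_pow, Complex.I_sq]
    have hDD : ((Real.sqrt D : ℝ) : ℂ) ^ 2 = (D : ℂ) := by
      rw [← Complex.ofReal_pow, Real.sq_sqrt hD0.le]
    rw [hDD]
    have hDne : (D : ℂ) ≠ 0 := by
      simp only [ne_eq, Complex.ofReal_eq_zero]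
      exact hD0.ne'
    field_simp
  set Y : H →L[ℂ] H := prodDesc (fun t => V' t * NormedSpace.exp (z • O' t)) 1 (q + 1)
    - Aprod V' (q + 1) - z • Bsum V' O' (q + 1) - (z ^ 2 / 2) • Csum V' O' (q + 1) with hYdef
  have main : (inner ℂ ψ
        ((NormedSpace.exp (z • O (q + 1)) *
            prodDesc (fun t => V t * NormedSpace.exp (z • O t)) 1 q) ψ) : ℂ)
      - (inner ℂ ψ (prodDesc V 1 q ψ) : ℂ)
      - z * ∑ l ∈ Finset.Icc 1 (q + 1),
          (inner ℂ ψ ((prodDesc V l q * O l * prodDesc V 1 (l - 1)) ψ) : ℂ)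
      + (1 / (2 * (D : ℂ))) *
          ∑ l ∈ Finset.Icc 1 (q + 1), ∑ m ∈ Finset.Icc 1 (q + 1),
            (inner ℂ ψ
              ((prodDesc V (max l m) q * O (max l m) *
                  prodDesc V (min l m) (max l m - 1) * O (min l m) *
                  prodDesc V 1 (min l m - 1)) ψ) : ℂ)
      = (inner ℂ ψ (Y ψ) : ℂ) := by
    rw [hYdef]
    simp only [ContinuousLinearMap.sub_apply, ContinuousLinearMap.smul_apply,
      inner_sub_right, inner_smul_right]
    rw [hGeq, hAeq, hBeq, hCeq, hz2]
    ring
  have hbound : ‖Y‖ ≤ K * ‖z‖ ^ 3 :=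
    hK (H →L[ℂ] H) hone V' O' z hV'le hO'le hz1
  have hrpow : K * ‖z‖ ^ 3 = K * D ^ (-(3 / 2) : ℝ) := by
    congr 1
    rw [hznorm]
    have hs : Real.sqrt D ^ (3:ℕ) = D ^ ((3:ℝ) / 2) := by
      rw [Real.sqrt_eq_rpow, ← Real.rpow_natCast (D ^ ((1:ℝ) / 2)) 3, ← Real.rpow_mul hD0.le]
      norm_num
    rw [inv_pow, hs, ← Real.rpow_neg hD0.le]
    try norm_num
  rw [main]
  calc ‖(inner ℂ ψ (Y ψ) : ℂ)‖ ≤ ‖ψ‖ * ‖Y ψ‖ := norm_inner_le_norm _ _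
    _ ≤ ‖ψ‖ * (‖Y‖ * ‖ψ‖) := by
        apply mul_le_mul_of_nonneg_left (ContinuousLinearMap.le_opNorm Y ψ) (norm_nonneg _)
    _ = ‖Y‖ := by rw [hψ]; ring
    _ ≤ K * ‖z‖ ^ 3 := hbound
    _ = K * D ^ (-(3 / 2) : ℝ) := hrpow
end

section
/- Let H be a finite-dimensional complex inner product space and u, v ∈ H with ⟨u, v⟩ = 0. Then for every positive integer D: ‖(u+v)^{⊗D} − u^{⊗D}‖ ≤ √D · ‖v‖ · (‖u‖² + ‖v‖²)^{(D−1)/2}, where the norm on the left is taken in the D-fold tensor power H^{⊗D}. -/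
open scoped TensorProduct BigOperators

/-- Coordinate functional of the `D`-fold tensor power `H^{⊗D}` with respect to the basis
tensors built from an orthonormal basis `b` of `H`: on elementary tensors,
`tpCoord b m (u_1 ⊗ ⋯ ⊗ u_D) = ∏ i, ⟨b (m i), u i⟩`. -/
noncomputable def tpCoord {H : Type*} [NormedAddCommGroup H] [InnerProductSpace ℂ H]
    {ι : Type*} [Fintype ι] [DecidableEq ι] (b : OrthonormalBasis ι ℂ H) {D : ℕ}
    (m : Fin D → ι) : (⨂[ℂ] _ : Fin D, H) →ₗ[ℂ] ℂ :=
  PiTensorProduct.lift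
    ((MultilinearMap.mkPiAlgebra ℂ (Fin D) ℂ).compLinearMap fun i => b.toBasis.coord (m i))

/-- The inner product of the `D`-fold tensor power `H^{⊗D}`, expressed in coordinates with
respect to an orthonormal basis `b` of `H`.  It is the unique inner product determined on
elementary tensors by `⟨u_1 ⊗ ⋯ ⊗ u_D, w_1 ⊗ ⋯ ⊗ w_D⟩ = ∏ i, ⟨u_i, w_i⟩`
(conjugate-linear in the first argument). -/
noncomputable def tpInner {H : Type*} [NormedAddCommGroup H] [InnerProductSpace ℂ H]
    {ι : Type*} [Fintype ι] [DecidableEq ι] (b : OrthonormalBasis ι ℂ H) {D : ℕ}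
    (x y : ⨂[ℂ] _ : Fin D, H) : ℂ :=
  ∑ m : Fin D → ι, (starRingEnd ℂ) (tpCoord b m x) * tpCoord b m y

/-- The Hilbert norm of the `D`-fold tensor power `H^{⊗D}` induced by `tpInner`. -/
noncomputable def tpNorm {H : Type*} [NormedAddCommGroup H] [InnerProductSpace ℂ H]
    {ι : Type*} [Fintype ι] [DecidableEq ι] (b : OrthonormalBasis ι ℂ H) {D : ℕ}
    (x : ⨂[ℂ] _ : Fin D, H) : ℝ :=
  Real.sqrt (tpInner b x x).re

section Aux
variable {H : Type*} [NormedAddCommGroup H] [InnerProductSpace ℂ H]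
    {ι : Type*} [Fintype ι] [DecidableEq ι] (b : OrthonormalBasis ι ℂ H) {D : ℕ}

lemma tpCoord_tprod (m : Fin D → ι) (f : Fin D → H) :
    tpCoord b m (PiTensorProduct.tprod ℂ f) = ∏ i, (inner ℂ (b (m i)) (f i) : ℂ) := by
  simp [tpCoord, OrthonormalBasis.coe_toBasis_repr_apply, OrthonormalBasis.repr_apply_apply]

lemma tpInner_tprod (f g : Fin D → H) :
    tpInner b (PiTensorProduct.tprod ℂ f) (PiTensorProduct.tprod ℂ g)
      = ∏ i, (inner ℂ (f i) (g i) : ℂ) := by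
  simp only [tpInner, tpCoord_tprod, map_prod, ← Finset.prod_mul_distrib]
  rw [← Fintype.piFinset_univ,
    ← Finset.prod_univ_sum (fun _ : Fin D => (Finset.univ : Finset ι))
      (fun i j => (starRingEnd ℂ) (inner ℂ (b j) (f i) : ℂ) * inner ℂ (b j) (g i))]
  congr 1; funext i
  simp_rw [← inner_conj_symm (f i)]
  simp [b.sum_inner_mul_inner]

lemma tpInner_sum_sum {α : Type*} (s t : Finset α)
    (c d : α → ⨂[ℂ] _ : Fin D, H) :
    tpInner b (∑ k ∈ s, c k) (∑ l ∈ t, d l)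
      = ∑ k ∈ s, ∑ l ∈ t, tpInner b (c k) (d l) := by
  simp only [tpInner, map_sum, Finset.mul_sum, Finset.sum_mul]
  refine (Finset.sum_comm).trans ?_
  refine (Finset.sum_congr rfl fun l _ => Finset.sum_comm).trans ?_
  exact Finset.sum_comm

end Aux

/-- If `⟨u, v⟩ = 0` then
`‖(u+v)^{⊗D} − u^{⊗D}‖ ≤ √D·‖v‖·(‖u‖²+‖v‖²)^{(D−1)/2}` in the `D`-fold tensor power of
`H`, for any orthonormal basis `b` of `H` inducing the tensor norm. -/
theorem stmt6 {H : Type*} [NormedAddCommGroup H] [InnerProductSpace ℂ H]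
    [FiniteDimensional ℂ H] {ι : Type*} [Fintype ι] [DecidableEq ι]
    (b : OrthonormalBasis ι ℂ H) (u v : H) (huv : (inner ℂ u v : ℂ) = 0)
    (D : ℕ) (hD : 0 < D) :
    tpNorm b ((PiTensorProduct.tprod ℂ fun _ : Fin D => u + v) -
        (PiTensorProduct.tprod ℂ fun _ : Fin D => u))
      ≤ Real.sqrt D * ‖v‖ * (‖u‖ ^ 2 + ‖v‖ ^ 2) ^ (((D : ℝ) - 1) / 2) := by
  set S : ℝ := ‖u‖ ^ 2 + ‖v‖ ^ 2 with hSdef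
  have hS0 : 0 ≤ S := by positivity
  have hSuv : ‖u + v‖ ^ 2 = S := by
    have := norm_add_sq_eq_norm_sq_add_norm_sq_of_inner_eq_zero u v huv
    rw [hSdef]; nlinarith
  set f : ℕ → Fin D → H := fun k i =>
    if (i : ℕ) < k then u + v else if (i : ℕ) = k then v else u with hfdef
  set c : ℕ → (⨂[ℂ] _ : Fin D, H) := fun k => PiTensorProduct.tprod ℂ (f k) with hcdef
  set g : ℕ → (⨂[ℂ] _ : Fin D, H) := fun k =>
    PiTensorProduct.tprod ℂ (fun i : Fin D => if (i : ℕ) < k then u + v else u) with hgdef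
  have hcc : ∀ k l : ℕ, tpInner b (c k) (c l) = ∏ i, (inner ℂ (f k i) (f l i) : ℂ) :=
    fun k l => tpInner_tprod b (f k) (f l)
  have hx : (PiTensorProduct.tprod ℂ fun _ : Fin D => u + v) -
      (PiTensorProduct.tprod ℂ fun _ : Fin D => u)
      = ∑ k ∈ Finset.range D, c k := by
    have h0 : g 0 = PiTensorProduct.tprod ℂ (fun _ : Fin D => u) := by
      simp [hgdef]
    have hDeq : g D = PiTensorProduct.tprod ℂ (fun _ : Fin D => u + v) := by
      simp only [hgdef]
      congr 1; funext i; simp [i.isLt]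
    rw [← hDeq, ← h0, ← Finset.sum_range_sub g D]
    refine Finset.sum_congr rfl fun k hk => ?_
    rw [Finset.mem_range] at hk
    set j : Fin D := ⟨k, hk⟩ with hj
    set base : Fin D → H := fun i : Fin D => if (i : ℕ) < k then u + v else u with hbase
    have h1 : (fun i : Fin D => if (i : ℕ) < k + 1 then u + v else u)
        = Function.update base j (u + v) := by
      funext i
      rcases eq_or_ne i j with rfl | hne
      · simp [hj]
      · have hik : (i : ℕ) ≠ k := fun h => hne (Fin.ext h)
        rw [Function.update_of_ne hne]
        exact if_congr (by omega) rfl rfl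
    have h2 : base = Function.update base j u := by
      funext i
      rcases eq_or_ne i j with rfl | hne
      · simp [hbase, hj]
      · rw [Function.update_of_ne hne]
    have h3 : f k = Function.update base j v := by
      funext i
      rcases eq_or_ne i j with rfl | hne
      · simp [hfdef, hj]
      · have hik : (i : ℕ) ≠ k := fun h => hne (Fin.ext h)
        rw [Function.update_of_ne hne]
        simp only [hfdef, hbase, if_neg hik]
    have hadd := MultilinearMap.map_update_add (PiTensorProduct.tprod ℂ
      (s := fun _ : Fin D => H)) base j u v
    have e1 : g (k + 1) = g k + c k := by
      show PiTensorProduct.tprod ℂ (fun i : Fin D => if (i : ℕ) < k + 1 then u + v else u)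
        = g k + c k
      rw [h1, hadd, ← h2, ← h3]
    rw [e1]
    exact add_sub_cancel_left _ _
  rw [hx]
  have horth : ∀ k ∈ Finset.range D, ∀ l ∈ Finset.range D, k ≠ l →
      tpInner b (c k) (c l) = 0 := by
    intro k hk l hl hkl
    rw [Finset.mem_range] at hk hl
    rw [hcc]
    rcases lt_or_gt_of_ne hkl with h | h
    · refine Finset.prod_eq_zero (Finset.mem_univ (⟨l, hl⟩ : Fin D)) ?_
      have h1 : f k ⟨l, hl⟩ = u := by
        show (if l < k then u + v else if l = k then v else u) = u
        rw [if_neg (by omega), if_neg (by omega)]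
      have h2 : f l ⟨l, hl⟩ = v := by
        show (if l < l then u + v else if l = l then v else u) = v
        rw [if_neg (by omega), if_pos rfl]
      rw [h1, h2, huv]
    · refine Finset.prod_eq_zero (Finset.mem_univ (⟨k, hk⟩ : Fin D)) ?_
      have h1 : f k ⟨k, hk⟩ = v := by
        show (if k < k then u + v else if k = k then v else u) = v
        rw [if_neg (by omega), if_pos rfl]
      have h2 : f l ⟨k, hk⟩ = u := by
        show (if k < l then u + v else if k = l then v else u) = u
        rw [if_neg (by omega), if_neg (by omega)]
      rw [h1, h2, ← inner_conj_symm, huv, map_zero]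
  have hdiag : ∀ k ∈ Finset.range D,
      (tpInner b (c k) (c k)).re ≤ ‖v‖ ^ 2 * S ^ (D - 1) := by
    intro k hk
    rw [Finset.mem_range] at hk
    have hre : (tpInner b (c k) (c k)).re = ∏ i, ‖f k i‖ ^ 2 := by
      rw [hcc]
      simp_rw [inner_self_eq_norm_sq_to_K]
      norm_cast
    rw [hre]
    set j : Fin D := ⟨k, hk⟩ with hj
    rw [← Finset.mul_prod_erase Finset.univ _ (Finset.mem_univ j)]
    have hfj : f k j = v := by
      show (if k < k then u + v else if k = k then v else u) = v
      rw [if_neg (by omega), if_pos rfl]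
    rw [hfj]
    have hcard : (Finset.univ.erase j).card = D - 1 := by
      rw [Finset.card_erase_of_mem (Finset.mem_univ j), Finset.card_univ, Fintype.card_fin]
    have hle : ∏ i ∈ Finset.univ.erase j, ‖f k i‖ ^ 2
        ≤ ∏ _i ∈ Finset.univ.erase j, S := by
      refine Finset.prod_le_prod (fun i _ => by positivity) (fun i _ => ?_)
      rcases lt_trichotomy ((i : ℕ)) k with h | h | h
      · have hfi : f k i = u + v := by
          show (if (i : ℕ) < k then u + v else if (i : ℕ) = k then v else u) = u + v
          rw [if_pos h]
        rw [hfi, hSuv]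
      · have hfi : f k i = v := by
          show (if (i : ℕ) < k then u + v else if (i : ℕ) = k then v else u) = v
          rw [if_neg (by omega), if_pos h]
        rw [hfi, hSdef]; nlinarith [sq_nonneg ‖u‖]
      · have hfi : f k i = u := by
          show (if (i : ℕ) < k then u + v else if (i : ℕ) = k then v else u) = u
          rw [if_neg (by omega), if_neg (by omega)]
        rw [hfi, hSdef]; nlinarith [sq_nonneg ‖v‖]
    rw [Finset.prod_const, hcard] at hle
    have hv2 : (0:ℝ) ≤ ‖v‖ ^ 2 := by positivity
    nlinarith [hle]
  have hsum : (tpInner b (∑ k ∈ Finset.range D, c k) (∑ k ∈ Finset.range D, c k)).re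
      ≤ D * (‖v‖ ^ 2 * S ^ (D - 1)) := by
    rw [tpInner_sum_sum]
    have hcollapse : ∀ k ∈ Finset.range D,
        ∑ l ∈ Finset.range D, tpInner b (c k) (c l) = tpInner b (c k) (c k) := by
      intro k hk
      exact Finset.sum_eq_single_of_mem k hk (fun l hl hlk => horth k hk l hl (Ne.symm hlk))
    rw [Finset.sum_congr rfl hcollapse, Complex.re_sum]
    calc ∑ k ∈ Finset.range D, (tpInner b (c k) (c k)).re
        ≤ ∑ _k ∈ Finset.range D, ‖v‖ ^ 2 * S ^ (D - 1) := Finset.sum_le_sum hdiag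
      _ = D * (‖v‖ ^ 2 * S ^ (D - 1)) := by rw [Finset.sum_const, Finset.card_range]; ring
  have hrhs : Real.sqrt (D * (‖v‖ ^ 2 * S ^ (D - 1)))
      = Real.sqrt D * ‖v‖ * S ^ (((D : ℝ) - 1) / 2) := by
    rw [Real.sqrt_mul (by positivity), Real.sqrt_mul (by positivity),
      Real.sqrt_sq (norm_nonneg v)]
    have hs : Real.sqrt (S ^ (D - 1)) = S ^ (((D : ℝ) - 1) / 2) := by
      rw [Real.sqrt_eq_rpow, ← Real.rpow_natCast S (D - 1), ← Real.rpow_mul hS0]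
      congr 1
      rw [Nat.cast_sub hD, Nat.cast_one]
      ring
    rw [hs]; ring
  calc tpNorm b (∑ k ∈ Finset.range D, c k)
      ≤ Real.sqrt (D * (‖v‖ ^ 2 * S ^ (D - 1))) := Real.sqrt_le_sqrt hsum
    _ = Real.sqrt D * ‖v‖ * S ^ (((D : ℝ) - 1) / 2) := hrhs
end

section
/- Let p ≥ 1 and β_1, …, β_p ∈ ℝ. For all 1 ≤ j < k ≤ p: Σ_{a ∈ {±1}^{2p+1}} a_{−j} · a_{−k} · f(a) = exp(2i Σ_{t=j}^{k−1} β_t), where the sum is over bitstrings a = (a_l)_{l ∈ {−p,…,−1,0,1,…,p}}. -/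
open scoped BigOperators
open Finset


noncomputable def braXket (θ : ℝ) (a b : ℤ) : ℂ :=
  if a = b then (Real.cos θ : ℂ) else Complex.I * (Real.sin θ : ℂ)

def signAt (p : ℕ) (a : Fin (2 * p + 1) → ℤˣ) (l : ℤ) : ℤ :=
  if h : (l + p).toNat < 2 * p + 1 then (a ⟨(l + p).toNat, h⟩ : ℤ) else 1

noncomputable def fTwo (p : ℕ) (β : ℕ → ℝ) (z : ℤ → ℤ) : ℂ :=
  (1 / 2 : ℂ) * braXket (β p) (z p) (z 0) * braXket (-β p) (z 0) (z (-(p : ℤ))) *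
    ∏ t ∈ Finset.Icc 1 (p - 1),
      (braXket (β t) (z t) (z ((t : ℤ) + 1)) *
        braXket (-β t) (z (-(t : ℤ) - 1)) (z (-(t : ℤ))))

noncomputable def hX (θ : ℝ) (x : ℤˣ) : ℂ :=
  if x = 1 then (Real.cos θ : ℂ) else Complex.I * (Real.sin θ : ℂ)

lemma braXket_units (θ : ℝ) (u v : ℤˣ) :
    braXket θ (u : ℤ) (v : ℤ) = hX θ (u * v) := by
  rcases Int.units_eq_one_or u with rfl | rfl <;>
    rcases Int.units_eq_one_or v with rfl | rfl <;>
      norm_num [braXket, hX]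

lemma units_sq (u : ℤˣ) : ((u : ℤ) : ℂ) * ((u : ℤ) : ℂ) = 1 := by
  rcases Int.units_eq_one_or u with rfl | rfl <;> norm_num

def sigmaF (p : ℕ) : ℕ → ℕ := fun s =>
  if s < p then s + p + 1 else if s = p then p else s - p - 1

lemma sigmaF_lt (p : ℕ) {s : ℕ} (hs : s < 2 * p + 1) : sigmaF p s < 2 * p + 1 := by
  unfold sigmaF; split_ifs <;> omega

def sigApp (p : ℕ) (s : Fin (2 * p + 1)) : Fin (2 * p + 1) :=
  ⟨sigmaF p s.val, sigmaF_lt p s.isLt⟩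

lemma sigApp_invol (p : ℕ) (s : Fin (2 * p + 1)) : sigApp p (sigApp p s) = s := by
  have hs := s.isLt
  ext
  show sigmaF p (sigmaF p s.val) = s.val
  unfold sigmaF
  split_ifs <;> omega

def ext' {n : ℕ} (c : Fin (n + 1) → ℤˣ) : ℕ → ℤˣ :=
  fun m => if h : m < n + 1 then c ⟨m, h⟩ else 1

lemma telescope (E : ℕ → ℤˣ) (n : ℕ) : ∀ m, m ≤ n + 1 →
    ∏ i ∈ Finset.Icc m n, (((E i * E (i + 1) : ℤˣ) : ℤ) : ℂ)
      = ((E m : ℤ) : ℂ) * ((E (n + 1) : ℤ) : ℂ) := by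
  induction n with
  | zero =>
    intro m hm
    interval_cases m
    · simp
    · rw [show Finset.Icc 1 0 = ∅ from rfl]
      simp [units_sq]
  | succ n ih =>
    intro m hm
    by_cases hm2 : m = n + 2
    · subst hm2
      rw [Finset.Icc_eq_empty (by omega)]
      simp [units_sq]
    · rw [Finset.prod_Icc_succ_top (by omega), ih m (by omega)]
      push_cast
      linear_combination ((E m : ℤ) : ℂ) * ((E (n + 2) : ℤ) : ℂ) * units_sq (E (n + 1))

lemma pointwise (p j k : ℕ) (hp : 1 ≤ p) (hj : 1 ≤ j) (hjk : j < k) (hk : k ≤ p)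
    (β : ℕ → ℝ) (c : Fin (2 * p + 1) → ℤˣ) :
    (1 / 2 : ℂ) * ∏ i ∈ Finset.range (2 * p),
      ((if 2 * p + 1 - k ≤ i ∧ i ≤ 2 * p - j
          then (((ext' c i * ext' c (i + 1) : ℤˣ) : ℤ) : ℂ) else 1) *
        hX (if i < p then β (i + 1) else -β (2 * p - i)) (ext' c i * ext' c (i + 1)))
    = ((signAt p (fun s => c (sigApp p s)) (-(j : ℤ)) : ℂ) *
        (signAt p (fun s => c (sigApp p s)) (-(k : ℤ)) : ℂ) *
        fTwo p β (signAt p (fun s => c (sigApp p s)))) := by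
  set E : ℕ → ℤˣ := ext' c with hE
  set A : Fin (2 * p + 1) → ℤˣ := fun s => c (sigApp p s) with hA
  -- signAt values
  have key : ∀ (l : ℤ) (m : ℕ), -(p : ℤ) ≤ l → l ≤ p → sigmaF p (l + p).toNat = m →
      signAt p A l = ((E m : ℤˣ) : ℤ) := by
    intro l m h1 h2 h3
    have h4 : (l + p).toNat < 2 * p + 1 := by omega
    unfold signAt
    rw [dif_pos h4]
    show ((c (sigApp p ⟨(l + p).toNat, h4⟩) : ℤ)) = ((E m : ℤˣ) : ℤ)
    have h5 : sigmaF p (l + p).toNat < 2 * p + 1 := sigmaF_lt p h4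
    rw [hE]
    unfold ext'
    rw [dif_pos (h3 ▸ h5)]
    congr 1
    subst h3
    rfl
  have z_p : signAt p A (p : ℤ) = ((E (p - 1) : ℤˣ) : ℤ) := by
    refine key _ _ (by omega) (by omega) ?_
    have : (((p : ℕ) : ℤ) + p).toNat = 2 * p := by omega
    rw [this]; unfold sigmaF; split_ifs <;> omega
  have z_0 : signAt p A (0 : ℤ) = ((E p : ℤˣ) : ℤ) := by
    refine key _ _ (by omega) (by omega) ?_
    have : ((0 : ℤ) + p).toNat = p := by omega
    rw [this]; unfold sigmaF; split_ifs <;> omega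
  have z_negp : signAt p A (-(p : ℤ)) = ((E (p + 1) : ℤˣ) : ℤ) := by
    refine key _ _ (by omega) (by omega) ?_
    have : (-(p : ℤ) + p).toNat = 0 := by omega
    rw [this]; unfold sigmaF; split_ifs <;> omega
  have z_negj : signAt p A (-(j : ℤ)) = ((E (2 * p + 1 - j) : ℤˣ) : ℤ) := by
    refine key _ _ (by omega) (by omega) ?_
    have : (-(j : ℤ) + p).toNat = p - j := by omega
    rw [this]; unfold sigmaF; split_ifs <;> omega
  have z_negk : signAt p A (-(k : ℤ)) = ((E (2 * p + 1 - k) : ℤˣ) : ℤ) := by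
    refine key _ _ (by omega) (by omega) ?_
    have : (-(k : ℤ) + p).toNat = p - k := by omega
    rw [this]; unfold sigmaF; split_ifs <;> omega
  have z_t : ∀ t : ℕ, 1 ≤ t → t ≤ p - 1 →
      signAt p A (t : ℤ) = ((E (t - 1) : ℤˣ) : ℤ) := by
    intro t h1 h2
    refine key _ _ (by omega) (by omega) ?_
    have : (((t : ℕ) : ℤ) + p).toNat = t + p := by omega
    rw [this]; unfold sigmaF; split_ifs <;> omega
  have z_t1 : ∀ t : ℕ, 1 ≤ t → t ≤ p - 1 →
      signAt p A ((t : ℤ) + 1) = ((E t : ℤˣ) : ℤ) := by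
    intro t h1 h2
    refine key _ _ (by omega) (by omega) ?_
    have : (((t : ℕ) : ℤ) + 1 + p).toNat = t + 1 + p := by omega
    rw [this]; unfold sigmaF; split_ifs <;> omega
  have z_negt : ∀ t : ℕ, 1 ≤ t → t ≤ p - 1 →
      signAt p A (-(t : ℤ)) = ((E (2 * p + 1 - t) : ℤˣ) : ℤ) := by
    intro t h1 h2
    refine key _ _ (by omega) (by omega) ?_
    have : (-((t : ℕ) : ℤ) + p).toNat = p - t := by omega
    rw [this]; unfold sigmaF; split_ifs <;> omega
  have z_negt1 : ∀ t : ℕ, 1 ≤ t → t ≤ p - 1 →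
      signAt p A (-(t : ℤ) - 1) = ((E (2 * p - t) : ℤˣ) : ℤ) := by
    intro t h1 h2
    refine key _ _ (by omega) (by omega) ?_
    have : (-((t : ℕ) : ℤ) - 1 + p).toNat = p - t - 1 := by omega
    rw [this]; unfold sigmaF; split_ifs <;> omega
  -- rewrite the RHS
  have prodRHS : (∏ t ∈ Finset.Icc 1 (p - 1),
        (braXket (β t) (signAt p A (t : ℤ)) (signAt p A ((t : ℤ) + 1)) *
          braXket (-β t) (signAt p A (-(t : ℤ) - 1)) (signAt p A (-(t : ℤ)))))
      = ∏ t ∈ Finset.Icc 1 (p - 1),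
          (hX (β t) (E (t - 1) * E t) * hX (-β t) (E (2 * p - t) * E (2 * p + 1 - t))) := by
    refine Finset.prod_congr rfl fun t ht => ?_
    rw [Finset.mem_Icc] at ht
    rw [z_t t ht.1 ht.2, z_t1 t ht.1 ht.2, z_negt t ht.1 ht.2, z_negt1 t ht.1 ht.2,
      braXket_units, braXket_units]
  rw [fTwo, z_p, z_0, z_negp, z_negj, z_negk, braXket_units, braXket_units, prodRHS]
  -- rewrite the LHS
  rw [Finset.prod_mul_distrib]
  -- the sign part
  have hsub : Finset.Icc (2 * p + 1 - k) (2 * p - j) ⊆ Finset.range (2 * p) := by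
    intro i hi
    rw [Finset.mem_Icc] at hi
    rw [Finset.mem_range]
    omega
  have signpart :
      (∏ i ∈ Finset.range (2 * p), (if 2 * p + 1 - k ≤ i ∧ i ≤ 2 * p - j
          then (((E i * E (i + 1) : ℤˣ) : ℤ) : ℂ) else 1))
      = ((E (2 * p + 1 - k) : ℤ) : ℂ) * ((E (2 * p + 1 - j) : ℤ) : ℂ) := by
    rw [← Finset.prod_subset hsub (fun x _ hx => by
      rw [if_neg]
      intro hcon
      exact hx (Finset.mem_Icc.mpr ⟨hcon.1, hcon.2⟩))]
    have e1 : (∏ i ∈ Finset.Icc (2 * p + 1 - k) (2 * p - j),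
          (if 2 * p + 1 - k ≤ i ∧ i ≤ 2 * p - j
            then (((E i * E (i + 1) : ℤˣ) : ℤ) : ℂ) else 1))
        = ∏ i ∈ Finset.Icc (2 * p + 1 - k) (2 * p - j), (((E i * E (i + 1) : ℤˣ) : ℤ) : ℂ) := by
      refine Finset.prod_congr rfl fun i hi => ?_
      rw [Finset.mem_Icc] at hi
      exact if_pos hi
    rw [e1, telescope E (2 * p - j) (2 * p + 1 - k) (by omega),
      show 2 * p - j + 1 = 2 * p + 1 - j by omega]
  rw [signpart]
  -- the hX part
  have hB1 : (∏ i ∈ Finset.Ico 0 p,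
        hX (if i < p then β (i + 1) else -β (2 * p - i)) (E i * E (i + 1)))
      = ∏ t ∈ Finset.Icc 1 p, hX (β t) (E (t - 1) * E t) := by
    refine Finset.prod_nbij' (fun i => i + 1) (fun t => t - 1) ?_ ?_ ?_ ?_ ?_
    · intro a ha; simp only [Finset.mem_Ico] at ha; simp only [Finset.mem_Icc]; omega
    · intro a ha; simp only [Finset.mem_Icc] at ha; simp only [Finset.mem_Ico]; omega
    · intro a _; beta_reduce; omega
    · intro a ha; simp only [Finset.mem_Icc] at ha; beta_reduce; omega
    · intro a ha
      rw [Finset.mem_Ico] at ha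
      rw [if_pos ha.2]
      simp
  have hB2 : (∏ i ∈ Finset.Ico p (2 * p),
        hX (if i < p then β (i + 1) else -β (2 * p - i)) (E i * E (i + 1)))
      = ∏ t ∈ Finset.Icc 1 p, hX (-β t) (E (2 * p - t) * E (2 * p + 1 - t)) := by
    refine Finset.prod_nbij' (fun i => 2 * p - i) (fun t => 2 * p - t) ?_ ?_ ?_ ?_ ?_
    · intro a ha; simp only [Finset.mem_Ico] at ha; simp only [Finset.mem_Icc]; omega
    · intro a ha; simp only [Finset.mem_Icc] at ha; simp only [Finset.mem_Ico]; omega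
    · intro a ha; simp only [Finset.mem_Ico] at ha; beta_reduce; omega
    · intro a ha; simp only [Finset.mem_Icc] at ha; beta_reduce; omega
    · intro a ha
      rw [Finset.mem_Ico] at ha
      rw [if_neg (by omega)]
      rw [show 2 * p - (2 * p - a) = a by omega, show 2 * p + 1 - (2 * p - a) = a + 1 by omega]
  have hXpart :
      (∏ i ∈ Finset.range (2 * p),
        hX (if i < p then β (i + 1) else -β (2 * p - i)) (E i * E (i + 1)))
      = (∏ t ∈ Finset.Icc 1 p, hX (β t) (E (t - 1) * E t)) *
          ∏ t ∈ Finset.Icc 1 p, hX (-β t) (E (2 * p - t) * E (2 * p + 1 - t)) := by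
    rw [Finset.range_eq_Ico,
      ← Finset.prod_Ico_consecutive _ (Nat.zero_le p) (by omega : p ≤ 2 * p), hB1, hB2]
  rw [hXpart]
  -- split top terms t = p from the Icc 1 p products
  have split1 : (∏ t ∈ Finset.Icc 1 p, hX (β t) (E (t - 1) * E t))
      = (∏ t ∈ Finset.Icc 1 (p - 1), hX (β t) (E (t - 1) * E t)) * hX (β p) (E (p - 1) * E p) := by
    conv_lhs => rw [show p = p - 1 + 1 by omega]
    rw [Finset.prod_Icc_succ_top (by omega)]
    rw [show p - 1 + 1 = p by omega]
  have split2 : (∏ t ∈ Finset.Icc 1 p, hX (-β t) (E (2 * p - t) * E (2 * p + 1 - t)))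
      = (∏ t ∈ Finset.Icc 1 (p - 1), hX (-β t) (E (2 * p - t) * E (2 * p + 1 - t))) *
          hX (-β p) (E p * E (p + 1)) := by
    conv_lhs => rw [show p = p - 1 + 1 by omega]
    rw [Finset.prod_Icc_succ_top (by omega)]
    rw [show p - 1 + 1 = p by omega,
      show 2 * p - p = p by omega, show 2 * p + 1 - p = p + 1 by omega]
  rw [split1, split2, Finset.prod_mul_distrib]
  ring


lemma sum_units (f : ℤˣ → ℂ) : ∑ x : ℤˣ, f x = f 1 + f (-1) := by
  have h : (Finset.univ : Finset ℤˣ) = {1, -1} := by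
    ext u
    simp only [Finset.mem_univ, true_iff, Finset.mem_insert, Finset.mem_singleton]
    exact Int.units_eq_one_or u
  rw [h, Finset.sum_insert (by decide), Finset.sum_singleton]

lemma sum_hX (θ : ℝ) : ∑ x : ℤˣ, hX θ x = Complex.exp ((θ : ℂ) * Complex.I) := by
  rw [sum_units, Complex.exp_mul_I]
  norm_num [hX]
  ring

lemma sum_x_hX (θ : ℝ) :
    ∑ x : ℤˣ, ((x : ℤ) : ℂ) * hX θ x = Complex.exp (-(θ : ℂ) * Complex.I) := by
  rw [sum_units, Complex.exp_mul_I]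
  norm_num [hX]
  ring_nf


lemma ext'_cons_zero {n : ℕ} (x : ℤˣ) (d : Fin (n + 1) → ℤˣ) :
    ext' (Fin.cons x d) 0 = x := by
  simp [ext']

lemma ext'_cons_succ {n : ℕ} (x : ℤˣ) (d : Fin (n + 1) → ℤˣ) (m : ℕ) :
    ext' (Fin.cons x d) (m + 1) = ext' d m := by
  unfold ext'
  by_cases h : m < n + 1
  · rw [dif_pos (by omega : m + 1 < n + 1 + 1), dif_pos h]
    show (Fin.cons x d : Fin (n + 2) → ℤˣ) (Fin.succ ⟨m, h⟩) = d ⟨m, h⟩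
    rw [Fin.cons_succ]
  · rw [dif_neg (by omega), dif_neg h]

lemma chain_sum (n : ℕ) (g : ℕ → ℤˣ → ℂ) :
    ∑ c : Fin (n + 1) → ℤˣ, ∏ i ∈ Finset.range n, g i (ext' c i * ext' c (i + 1))
      = 2 * ∏ i ∈ Finset.range n, ∑ x : ℤˣ, g i x := by
  induction n generalizing g with
  | zero =>
    simp [Finset.card_univ]
  | succ n ih =>
    rw [← Fintype.sum_equiv (Fin.consEquiv (fun _ : Fin (n + 2) => ℤˣ))
      (fun q => ∏ i ∈ Finset.range (n + 1),
        g i (ext' (Fin.cons q.1 q.2) i * ext' (Fin.cons q.1 q.2) (i + 1)))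
      (fun c => ∏ i ∈ Finset.range (n + 1), g i (ext' c i * ext' c (i + 1)))
      (fun q => by rfl)]
    rw [Fintype.sum_prod_type]
    have step : ∀ (x : ℤˣ) (d : Fin (n + 1) → ℤˣ),
        ∏ i ∈ Finset.range (n + 1),
          g i (ext' (Fin.cons x d) i * ext' (Fin.cons x d) (i + 1))
        = g 0 (x * ext' d 0) *
            ∏ i ∈ Finset.range n, g (i + 1) (ext' d i * ext' d (i + 1)) := by
      intro x d
      rw [Finset.prod_range_succ' (fun i =>
        g i (ext' (Fin.cons x d) i * ext' (Fin.cons x d) (i + 1)))]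
      rw [ext'_cons_zero, ext'_cons_succ]
      rw [mul_comm]
      congr 1
      refine Finset.prod_congr rfl fun i _ => ?_
      rw [ext'_cons_succ, ext'_cons_succ]
    have hx : ∀ x : ℤˣ, ∑ d : Fin (n + 1) → ℤˣ,
        ∏ i ∈ Finset.range (n + 1),
          g i (ext' (Fin.cons x d) i * ext' (Fin.cons x d) (i + 1))
        = ∑ d : Fin (n + 1) → ℤˣ, g 0 (x * ext' d 0) *
            ∏ i ∈ Finset.range n, g (i + 1) (ext' d i * ext' d (i + 1)) := by
      intro x
      exact Finset.sum_congr rfl fun d _ => step x d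
    calc ∑ x : ℤˣ, ∑ d : Fin (n + 1) → ℤˣ,
          ∏ i ∈ Finset.range (n + 1),
            g i (ext' (Fin.cons x d) i * ext' (Fin.cons x d) (i + 1))
        = ∑ d : Fin (n + 1) → ℤˣ, (∑ x : ℤˣ, g 0 (x * ext' d 0)) *
            ∏ i ∈ Finset.range n, g (i + 1) (ext' d i * ext' d (i + 1)) := by
          rw [Finset.sum_comm]
          refine Finset.sum_congr rfl fun d _ => ?_
          rw [Finset.sum_mul]
          exact Finset.sum_congr rfl fun x _ => step x d
      _ = ∑ d : Fin (n + 1) → ℤˣ, (∑ x : ℤˣ, g 0 x) *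
            ∏ i ∈ Finset.range n, g (i + 1) (ext' d i * ext' d (i + 1)) := by
          refine Finset.sum_congr rfl fun d _ => ?_
          congr 1
          exact Fintype.sum_equiv (Equiv.mulRight (ext' d 0))
            (fun x => g 0 (x * ext' d 0)) (g 0) (fun x => rfl)
      _ = (∑ x : ℤˣ, g 0 x) * ∑ d : Fin (n + 1) → ℤˣ,
            ∏ i ∈ Finset.range n, g (i + 1) (ext' d i * ext' d (i + 1)) := by
          rw [← Finset.mul_sum]
      _ = 2 * ∏ i ∈ Finset.range (n + 1), ∑ x : ℤˣ, g i x := by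
          rw [ih (fun i => g (i + 1))]
          rw [Finset.prod_range_succ' (fun i => ∑ x : ℤˣ, g i x)]
          ring


/-- The path-integral form of the single-qubit two-times autocorrelation:
`Σ_{a ∈ {±1}^{2p+1}} a_{−j} a_{−k} f(a) = exp(2i Σ_{t=j}^{k−1} β_t)` for `1 ≤ j < k ≤ p`. -/
theorem stmt12 (p : ℕ) (hp : 1 ≤ p) (β : ℕ → ℝ) (j k : ℕ)
    (hj : 1 ≤ j) (hjk : j < k) (hk : k ≤ p) :
    ∑ a : Fin (2 * p + 1) → ℤˣ,
        ((signAt p a (-(j : ℤ)) : ℂ) * (signAt p a (-(k : ℤ)) : ℂ) *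
          fTwo p β (signAt p a))
      = Complex.exp (2 * Complex.I * ∑ t ∈ Finset.Icc j (k - 1), (β t : ℂ)) := by
  classical
  have hbij : Function.Bijective
      (fun (c : Fin (2 * p + 1) → ℤˣ) => (fun s => c (sigApp p s))) := by
    apply Function.Involutive.bijective
    intro c
    funext s
    show c (sigApp p (sigApp p s)) = c s
    rw [sigApp_invol]
  have hsum : ∑ c : Fin (2 * p + 1) → ℤˣ,
      ((1 / 2 : ℂ) * ∏ i ∈ Finset.range (2 * p),
        ((if 2 * p + 1 - k ≤ i ∧ i ≤ 2 * p - j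
            then (((ext' c i * ext' c (i + 1) : ℤˣ) : ℤ) : ℂ) else 1) *
          hX (if i < p then β (i + 1) else -β (2 * p - i)) (ext' c i * ext' c (i + 1))))
      = ∑ a : Fin (2 * p + 1) → ℤˣ,
        ((signAt p a (-(j : ℤ)) : ℂ) * (signAt p a (-(k : ℤ)) : ℂ) *
          fTwo p β (signAt p a)) := by
    refine Fintype.sum_bijective _ hbij _ _ ?_
    intro c
    exact pointwise p j k hp hj hjk hk β c
  rw [← hsum]
  have hchain : ∑ c : Fin (2 * p + 1) → ℤˣ,
      (∏ i ∈ Finset.range (2 * p),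
        ((if 2 * p + 1 - k ≤ i ∧ i ≤ 2 * p - j
            then (((ext' c i * ext' c (i + 1) : ℤˣ) : ℤ) : ℂ) else 1) *
          hX (if i < p then β (i + 1) else -β (2 * p - i)) (ext' c i * ext' c (i + 1))))
      = 2 * ∏ i ∈ Finset.range (2 * p), ∑ x : ℤˣ,
          ((if 2 * p + 1 - k ≤ i ∧ i ≤ 2 * p - j then ((x : ℤ) : ℂ) else 1) *
            hX (if i < p then β (i + 1) else -β (2 * p - i)) x) :=
    chain_sum (2 * p) (fun i x =>
      (if 2 * p + 1 - k ≤ i ∧ i ≤ 2 * p - j then ((x : ℤ) : ℂ) else 1) *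
        hX (if i < p then β (i + 1) else -β (2 * p - i)) x)
  rw [← Finset.mul_sum, hchain]
  -- evaluate each single-site sum
  have hgi : ∀ i : ℕ, (∑ x : ℤˣ,
      ((if 2 * p + 1 - k ≤ i ∧ i ≤ 2 * p - j then ((x : ℤ) : ℂ) else 1) *
        hX (if i < p then β (i + 1) else -β (2 * p - i)) x))
      = Complex.exp (((if 2 * p + 1 - k ≤ i ∧ i ≤ 2 * p - j
            then -(if i < p then β (i + 1) else -β (2 * p - i))
            else (if i < p then β (i + 1) else -β (2 * p - i)) : ℝ) : ℂ) * Complex.I) := by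
    intro i
    by_cases hc : 2 * p + 1 - k ≤ i ∧ i ≤ 2 * p - j
    · simp only [if_pos hc]
      rw [sum_x_hX]
      push_cast
      ring_nf
    · simp only [if_neg hc, one_mul]
      rw [sum_hX]
  rw [Finset.prod_congr rfl (fun i _ => hgi i)]
  rw [← Complex.exp_sum]
  have harith : (∑ i ∈ Finset.range (2 * p),
      (if 2 * p + 1 - k ≤ i ∧ i ≤ 2 * p - j
        then -(if i < p then β (i + 1) else -β (2 * p - i))
        else (if i < p then β (i + 1) else -β (2 * p - i))))
      = 2 * ∑ t ∈ Finset.Icc j (k - 1), β t := by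
    have h1 : (∑ i ∈ Finset.Ico 0 p,
        (if 2 * p + 1 - k ≤ i ∧ i ≤ 2 * p - j
          then -(if i < p then β (i + 1) else -β (2 * p - i))
          else (if i < p then β (i + 1) else -β (2 * p - i))))
        = ∑ t ∈ Finset.Icc 1 p, β t := by
      refine Finset.sum_nbij' (fun i => i + 1) (fun t => t - 1) ?_ ?_ ?_ ?_ ?_
      · intro a ha; simp only [Finset.mem_Ico] at ha; simp only [Finset.mem_Icc]; omega
      · intro a ha; simp only [Finset.mem_Icc] at ha; simp only [Finset.mem_Ico]; omega
      · intro a _; beta_reduce; omega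
      · intro a ha; simp only [Finset.mem_Icc] at ha; beta_reduce; omega
      · intro a ha
        simp only [Finset.mem_Ico] at ha
        rw [if_neg (by omega), if_pos ha.2]
    have h2 : (∑ i ∈ Finset.Ico p (2 * p),
        (if 2 * p + 1 - k ≤ i ∧ i ≤ 2 * p - j
          then -(if i < p then β (i + 1) else -β (2 * p - i))
          else (if i < p then β (i + 1) else -β (2 * p - i))))
        = ∑ t ∈ Finset.Icc 1 p, (if j ≤ t ∧ t ≤ k - 1 then β t else -β t) := by
      refine Finset.sum_nbij' (fun i => 2 * p - i) (fun t => 2 * p - t) ?_ ?_ ?_ ?_ ?_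
      · intro a ha; simp only [Finset.mem_Ico] at ha; simp only [Finset.mem_Icc]; omega
      · intro a ha; simp only [Finset.mem_Icc] at ha; simp only [Finset.mem_Ico]; omega
      · intro a ha; simp only [Finset.mem_Ico] at ha; beta_reduce; omega
      · intro a ha; simp only [Finset.mem_Icc] at ha; beta_reduce; omega
      · intro a ha
        simp only [Finset.mem_Ico] at ha
        rw [if_neg (by omega : ¬ a < p)]
        by_cases hc : 2 * p + 1 - k ≤ a ∧ a ≤ 2 * p - j
        · rw [if_pos hc, if_pos (by omega : j ≤ 2 * p - a ∧ 2 * p - a ≤ k - 1)]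
          ring
        · rw [if_neg hc, if_neg (by omega : ¬ (j ≤ 2 * p - a ∧ 2 * p - a ≤ k - 1))]
    rw [Finset.range_eq_Ico,
      ← Finset.sum_Ico_consecutive _ (Nat.zero_le p) (by omega : p ≤ 2 * p), h1, h2,
      ← Finset.sum_add_distrib]
    have h3 : ∀ t ∈ Finset.Icc 1 p,
        (β t + if j ≤ t ∧ t ≤ k - 1 then β t else -β t)
        = (if t ∈ Finset.Icc j (k - 1) then 2 * β t else 0) := by
      intro t _
      by_cases hc : j ≤ t ∧ t ≤ k - 1
      · rw [if_pos hc, if_pos (Finset.mem_Icc.mpr hc)]; ring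
      · rw [if_neg hc, if_neg (fun hmem => hc (Finset.mem_Icc.mp hmem))]; ring
    rw [Finset.sum_congr rfl h3, Finset.sum_ite_mem,
      Finset.inter_eq_right.mpr (Finset.Icc_subset_Icc (by omega) (by omega)),
      Finset.mul_sum]
  rw [← Finset.sum_mul]
  rw [show (∑ i ∈ Finset.range (2 * p),
      ((if 2 * p + 1 - k ≤ i ∧ i ≤ 2 * p - j
        then -(if i < p then β (i + 1) else -β (2 * p - i))
        else (if i < p then β (i + 1) else -β (2 * p - i)) : ℝ) : ℂ))
      = ((∑ i ∈ Finset.range (2 * p),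
        (if 2 * p + 1 - k ≤ i ∧ i ≤ 2 * p - j
          then -(if i < p then β (i + 1) else -β (2 * p - i))
          else (if i < p then β (i + 1) else -β (2 * p - i))) : ℝ) : ℂ)
    from by push_cast; rfl]
  rw [harith]
  push_cast
  ring
end
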